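/- For any two l-tracks f and g on the multilayered cycle MC_n^k (surjective walks where every step traverses an edge), min over i of d(f(i), g(i)) is at most ⌊n/2⌋ + 1. Hence the direct vertex span of MC_n^k is at most ⌊n/2⌋ + 1. -/

import Mathlib

/-- The multilayered cycle `MC n k` on vertex set `ZMod n × Fin k`. -/
def MC (n k : ℕ) : SimpleGraph (ZMod n × Fin k) where
  Adj u v := u ≠ v ∧ ((u.1 = v.1 ∧ (u.2.1 + 1 = v.2.1 ∨ v.2.1 + 1 = u.2.1)) ∨
      (u.2 = v.2 ∧ (u.1 + 1 = v.1 ∨ v.1 + 1 = u.1)))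
  symm := by
    constructor
    rintro u v ⟨h1, h2⟩
    refine ⟨h1.symm, ?_⟩
    rcases h2 with ⟨ha, hb⟩ | ⟨ha, hb⟩
    · exact Or.inl ⟨ha.symm, hb.symm⟩
    · exact Or.inr ⟨ha.symm, hb.symm⟩
  loopless := by constructor; rintro u ⟨h1, -⟩; exact h1 rfl

/-- A lazy `l`-track on `G`: surjective, consecutive values equal or adjacent. -/
def IsLazyTrack {V : Type*} (G : SimpleGraph V) {l : ℕ} (f : Fin l → V) : Prop :=
  Function.Surjective f ∧
    ∀ i : Fin l, ∀ h : i.1 + 1 < l, f ⟨i.1 + 1, h⟩ = f i ∨ G.Adj (f i) (f ⟨i.1 + 1, h⟩)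

/-- An `l`-track on `G`: surjective, consecutive values adjacent. -/
def IsTrack {V : Type*} (G : SimpleGraph V) {l : ℕ} (f : Fin l → V) : Prop :=
  Function.Surjective f ∧
    ∀ i : Fin l, ∀ h : i.1 + 1 < l, G.Adj (f i) (f ⟨i.1 + 1, h⟩)

/-- `f` and `g` are opposite lazy `l`-tracks: exactly one of them moves at each step. -/
def OppositeTracks {V : Type*} (G : SimpleGraph V) {l : ℕ} (f g : Fin l → V) : Prop :=
  ∀ i : Fin l, ∀ h : i.1 + 1 < l,
    (G.Adj (f i) (f ⟨i.1 + 1, h⟩) ↔ g ⟨i.1 + 1, h⟩ = g i)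


section Aux

variable {n k : ℕ}

lemma adj_layer {u v : ZMod n × Fin k} (h : (MC n k).Adj u v) :
    |((u.2.1 : ℤ) - v.2.1)| ≤ 1 := by
  rcases h.2 with ⟨-, h2⟩ | ⟨h2, -⟩
  · rcases h2 with h2 | h2 <;> (rw [abs_le]; omega)
  · rw [h2]; simp

lemma ivt (L : ℕ → ℤ) (hs : ∀ m, |L (m + 1) - L m| ≤ 2) (a b : ℕ)
    (ha : 0 ≤ L a) (hb : L b ≤ 0) : ∃ m, |L m| ≤ 1 := by
  by_contra h
  push_neg at h
  have key1 : ∀ m, a ≤ m → 0 ≤ L m := by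
    intro m hm
    induction m, hm using Nat.le_induction with
    | base => exact ha
    | succ m hm ih =>
      have h1 := h m
      have h2 := hs m
      rcases abs_cases (L m) with ⟨e1, _⟩ | ⟨e1, _⟩ <;>
        rcases abs_cases (L (m + 1) - L m) with ⟨e2, _⟩ | ⟨e2, _⟩ <;> omega
  have key2 : ∀ m, b ≤ m → L m ≤ 0 := by
    intro m hm
    induction m, hm using Nat.le_induction with
    | base => exact hb
    | succ m hm ih =>
      have h1 := h m
      have h2 := hs m
      rcases abs_cases (L m) with ⟨e1, _⟩ | ⟨e1, _⟩ <;>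
        rcases abs_cases (L (m + 1) - L m) with ⟨e2, _⟩ | ⟨e2, _⟩ <;> omega
  have h1 := key1 (max a b) (le_max_left a b)
  have h2 := key2 (max a b) (le_max_right a b)
  have h3 := h (max a b)
  have : L (max a b) = 0 := le_antisymm h2 h1
  rw [this] at h3
  norm_num at h3

lemma walk_add (hn : 3 ≤ n) (a : ZMod n) (b : Fin k) (m : ℕ) :
    ∃ w : (MC n k).Walk (a, b) (a + (m : ZMod n), b), w.length = m := by
  haveI : Fact (1 < n) := ⟨by omega⟩
  induction m with
  | zero => exact ⟨SimpleGraph.Walk.nil.copy rfl (by simp), by simp⟩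
  | succ m ih =>
    obtain ⟨w, hw⟩ := ih
    have hadj : (MC n k).Adj (a + (m : ZMod n), b) (a + ((m + 1 : ℕ) : ZMod n), b) := by
      refine ⟨?_, Or.inr ⟨rfl, Or.inl (by push_cast; ring)⟩⟩
      intro hcon
      have h1 : a + (m : ZMod n) = a + ((m + 1 : ℕ) : ZMod n) := congrArg Prod.fst hcon
      push_cast at h1
      have h2 : (m : ZMod n) + 1 = m := by
        have := add_left_cancel h1
        linear_combination -this
      exact one_ne_zero (add_eq_left.mp h2)
    exact ⟨w.concat hadj, by simp [hw]⟩

lemma walk_sub (hn : 3 ≤ n) (a : ZMod n) (b : Fin k) (m : ℕ) :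
    ∃ w : (MC n k).Walk (a, b) (a - (m : ZMod n), b), w.length = m := by
  haveI : Fact (1 < n) := ⟨by omega⟩
  induction m with
  | zero => exact ⟨SimpleGraph.Walk.nil.copy rfl (by simp), by simp⟩
  | succ m ih =>
    obtain ⟨w, hw⟩ := ih
    have hadj : (MC n k).Adj (a - (m : ZMod n), b) (a - ((m + 1 : ℕ) : ZMod n), b) := by
      refine ⟨?_, Or.inr ⟨rfl, Or.inr (by push_cast; ring)⟩⟩
      intro hcon
      have h1 : a - (m : ZMod n) = a - ((m + 1 : ℕ) : ZMod n) := congrArg Prod.fst hcon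
      push_cast at h1
      have h2 : (m : ZMod n) + 1 = m := by linear_combination h1
      exact one_ne_zero (add_eq_left.mp h2)
    exact ⟨w.concat hadj, by simp [hw]⟩

lemma walk_cyc (hn : 3 ≤ n) (a c : ZMod n) (b : Fin k) :
    ∃ w : (MC n k).Walk (a, b) (c, b), w.length ≤ n / 2 := by
  haveI : NeZero n := ⟨by omega⟩
  set z := (c - a).val with hzdef
  have hz : ((z : ℕ) : ZMod n) = c - a := ZMod.natCast_rightInverse _
  have hzlt : z < n := ZMod.val_lt _
  by_cases hle : z ≤ n / 2
  · obtain ⟨w, hw⟩ := walk_add hn a b z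
    have he : a + ((z : ℕ) : ZMod n) = c := by rw [hz]; ring
    exact ⟨w.copy rfl (by rw [he]), by rw [SimpleGraph.Walk.length_copy, hw]; exact hle⟩
  · obtain ⟨w, hw⟩ := walk_sub hn a b (n - z)
    have he : a - (((n - z : ℕ)) : ZMod n) = c := by
      have hc : (((n - z : ℕ)) : ZMod n) = -(c - a) := by
        rw [Nat.cast_sub hzlt.le, hz, ZMod.natCast_self]
        ring
      rw [hc]; ring
    refine ⟨w.copy rfl (by rw [he]), ?_⟩
    rw [SimpleGraph.Walk.length_copy, hw]
    omega

lemma dist_le_aux (hn : 3 ≤ n) (u v : ZMod n × Fin k)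
    (h : |((u.2.1 : ℤ) - v.2.1)| ≤ 1) : (MC n k).dist u v ≤ n / 2 + 1 := by
  obtain ⟨w, hw⟩ := walk_cyc (k := k) hn u.1 v.1 u.2
  by_cases heq : u.2 = v.2
  · have hle := SimpleGraph.dist_le (w.copy (by rw [Prod.mk.eta]) (by rw [heq, Prod.mk.eta]))
    rw [SimpleGraph.Walk.length_copy] at hle
    omega
  · have hadj : (MC n k).Adj (v.1, u.2) (v.1, v.2) := by
      refine ⟨fun hc => heq ?_, Or.inl ⟨rfl, ?_⟩⟩
      · simp only [Prod.mk.injEq] at hc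
        exact hc.2
      show u.2.1 + 1 = v.2.1 ∨ v.2.1 + 1 = u.2.1
      rw [abs_le] at h
      have hne : u.2.1 ≠ v.2.1 := fun hc => heq (Fin.ext hc)
      omega
    have hle := SimpleGraph.dist_le
      ((w.concat hadj).copy (by rw [Prod.mk.eta]) (by rw [Prod.mk.eta]))
    rw [SimpleGraph.Walk.length_copy, SimpleGraph.Walk.length_concat] at hle
    omega

end Aux

theorem stmt11 (n k l : ℕ) (hn : 3 ≤ n) (hk : 2 ≤ k)
    (f g : Fin l → ZMod n × Fin k)
    (hf : IsTrack (MC n k) f) (hg : IsTrack (MC n k) g) :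
    ∃ i : Fin l, (MC n k).dist (f i) (g i) ≤ n / 2 + 1 := by
  haveI : NeZero n := ⟨by omega⟩
  obtain ⟨i0, hi0⟩ := hf.1 (0, ⟨k - 1, by omega⟩)
  obtain ⟨j0, hj0⟩ := hg.1 (0, ⟨k - 1, by omega⟩)
  have hl : 0 < l := i0.pos
  set pad : ℕ → Fin l := fun m => ⟨min m (l - 1), by omega⟩ with hpad
  set L : ℕ → ℤ := fun m => ((f (pad m)).2.1 : ℤ) - ((g (pad m)).2.1 : ℤ) with hL
  have hstep : ∀ m, |L (m + 1) - L m| ≤ 2 := by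
    intro m
    by_cases hm : m < l - 1
    · have hmeq : pad m = ⟨m, by omega⟩ := by
        apply Fin.ext; simp [hpad]; omega
      have hmeq2 : pad (m + 1) = ⟨m + 1, by omega⟩ := by
        apply Fin.ext; simp [hpad]; omega
      have h1 : |((f (pad m)).2.1 : ℤ) - ((f (pad (m + 1))).2.1 : ℤ)| ≤ 1 := by
        rw [hmeq, hmeq2]
        exact adj_layer (hf.2 ⟨m, by omega⟩ (show m + 1 < l by omega))
      have h2 : |((g (pad m)).2.1 : ℤ) - ((g (pad (m + 1))).2.1 : ℤ)| ≤ 1 := by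
        rw [hmeq, hmeq2]
        exact adj_layer (hg.2 ⟨m, by omega⟩ (show m + 1 < l by omega))
      simp only [hL]
      rw [abs_le] at h1 h2 ⊢
      constructor <;> omega
    · have hmeq : pad (m + 1) = pad m := by
        apply Fin.ext; simp [hpad]; omega
      simp [hL, hmeq]
  have ha : 0 ≤ L i0.1 := by
    have hp : pad i0.1 = i0 := by apply Fin.ext; simp [hpad]; omega
    have hgk := (g i0).2.2
    have hfval : (f i0).2.1 = k - 1 := by rw [hi0]
    simp only [hL, hp, hfval]
    omega
  have hb : L j0.1 ≤ 0 := by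
    have hp : pad j0.1 = j0 := by apply Fin.ext; simp [hpad]; omega
    have hfk := (f j0).2.2
    have hgval : (g j0).2.1 = k - 1 := by rw [hj0]
    simp only [hL, hp, hgval]
    omega
  obtain ⟨m, hm⟩ := ivt L hstep i0.1 j0.1 ha hb
  exact ⟨pad m, dist_le_aux hn _ _ hm⟩
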